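/- Suppose Assumption (A) holds. Then the integral ρ_∞ := ∫_{[0,1)^d} (ω(k) − ω_min)^{−1} dk is finite. -/

import Mathlib

open MeasureTheory
noncomputable section

open Set Metric
open scoped ENNReal

lemma integrableOn_inv_norm_sq_ball {d : ℕ} (hd : 3 ≤ d) (x₀ : Fin d → ℝ) (R : ℝ) :
    IntegrableOn (fun x : Fin d → ℝ => (‖x - x₀‖ ^ 2)⁻¹) (Metric.ball x₀ R) volume := by
  have hmeas : Measurable fun x : Fin d → ℝ => (‖x - x₀‖ ^ 2)⁻¹ := by fun_prop
  have hnn : ∀ x : Fin d → ℝ, 0 ≤ (‖x - x₀‖ ^ 2)⁻¹ := fun x => by positivity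
  constructor
  · exact (hmeas.aemeasurable).aestronglyMeasurable
  rw [HasFiniteIntegral]
  have heq : (∫⁻ a in Metric.ball x₀ R, ‖(‖a - x₀‖ ^ 2)⁻¹‖ₑ ∂volume)
      = ∫⁻ a in Metric.ball x₀ R, ENNReal.ofReal ((‖a - x₀‖ ^ 2)⁻¹) ∂volume :=
    lintegral_congr fun a => by rw [← Real.enorm_eq_ofReal (hnn a)]
  rw [heq, lintegral_eq_lintegral_meas_le _ (Filter.Eventually.of_forall fun a => hnn a)
    hmeas.aemeasurable]
  have key : ∀ t : ℝ, t ∈ Ioi (0:ℝ) →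
      (volume.restrict (Metric.ball x₀ R)) {a : Fin d → ℝ | t ≤ (‖a - x₀‖ ^ 2)⁻¹}
        ≤ volume (Metric.closedBall x₀ (t ^ (-(1:ℝ)/2))) := by
    intro t ht
    refine le_trans (Measure.restrict_le_self _) (measure_mono ?_)
    intro a ha
    simp only [Set.mem_setOf_eq] at ha
    have h1 : ‖a - x₀‖ ^ 2 ≤ t⁻¹ := by
      have := inv_anti₀ ht ha
      rwa [inv_inv] at this
    have hr : (0:ℝ) < t ^ (-(1:ℝ)/2) := Real.rpow_pos_of_pos ht _
    have hsq : (t ^ (-(1:ℝ)/2)) ^ 2 = t⁻¹ := by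
      rw [← Real.rpow_natCast (t ^ (-(1:ℝ)/2)) 2, ← Real.rpow_mul (le_of_lt ht)]
      norm_num
      exact Real.rpow_neg_one t
    have h2 : ‖a - x₀‖ ≤ t ^ (-(1:ℝ)/2) := by
      have : ‖a - x₀‖ ^ 2 ≤ (t ^ (-(1:ℝ)/2)) ^ 2 := by rw [hsq]; exact h1
      exact (pow_le_pow_iff_left₀ (norm_nonneg _) hr.le (by norm_num)).mp this
    simpa [Metric.mem_closedBall, dist_eq_norm] using h2
  calc ∫⁻ t in Ioi (0:ℝ),
        (volume.restrict (Metric.ball x₀ R)) {a : Fin d → ℝ | t ≤ (‖a - x₀‖ ^ 2)⁻¹}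
      ≤ (∫⁻ t in Ioc (0:ℝ) 1,
          (volume.restrict (Metric.ball x₀ R)) {a : Fin d → ℝ | t ≤ (‖a - x₀‖ ^ 2)⁻¹})
        + ∫⁻ t in Ioi (1:ℝ),
          (volume.restrict (Metric.ball x₀ R)) {a : Fin d → ℝ | t ≤ (‖a - x₀‖ ^ 2)⁻¹} := by
        rw [← lintegral_union measurableSet_Ioi (Ioc_disjoint_Ioi le_rfl)]
        exact lintegral_mono_set (by rw [Ioc_union_Ioi_eq_Ioi zero_le_one])
    _ < ∞ := by
        refine ENNReal.add_lt_top.2 ⟨?_, ?_⟩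
        · calc (∫⁻ t in Ioc (0:ℝ) 1,
              (volume.restrict (Metric.ball x₀ R)) {a : Fin d → ℝ | t ≤ (‖a - x₀‖ ^ 2)⁻¹})
              ≤ ∫⁻ _ in Ioc (0:ℝ) 1, volume (Metric.ball x₀ R) :=
                lintegral_mono fun t => le_trans (measure_mono (Set.subset_univ _))
                  (le_of_eq (Measure.restrict_apply_univ _))
            _ < ∞ := by
                rw [setLIntegral_const]
                exact ENNReal.mul_lt_top measure_ball_lt_top (by simp)
        · calc (∫⁻ t in Ioi (1:ℝ),
              (volume.restrict (Metric.ball x₀ R)) {a : Fin d → ℝ | t ≤ (‖a - x₀‖ ^ 2)⁻¹})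
              ≤ ∫⁻ t in Ioi (1:ℝ),
                  ENNReal.ofReal (t ^ (-(d:ℝ)/2)) * volume (Metric.ball (0 : Fin d → ℝ) 1) := by
                refine setLIntegral_mono' measurableSet_Ioi fun t ht => ?_
                have ht0 : (0:ℝ) < t := lt_trans zero_lt_one ht
                refine (key t ht0).trans ?_
                rw [Measure.addHaar_closedBall _ _ (Real.rpow_pos_of_pos ht0 _).le]
                have : (t ^ (-(1:ℝ)/2)) ^ Module.finrank ℝ (Fin d → ℝ)
                    = t ^ (-(d:ℝ)/2) := by
                  rw [← Real.rpow_natCast (t ^ (-(1:ℝ)/2)) _, ← Real.rpow_mul ht0.le]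
                  norm_num [Module.finrank_fintype_fun_eq_card]
                  ring_nf
                rw [this]
            _ < ∞ := by
                rw [lintegral_mul_const' _ _ measure_ball_lt_top.ne]
                refine ENNReal.mul_lt_top ?_ measure_ball_lt_top
                have hint : IntegrableOn (fun t : ℝ => t ^ (-(d:ℝ)/2)) (Ioi 1) volume := by
                  apply integrableOn_Ioi_rpow_of_lt _ zero_lt_one
                  have hd' : (3:ℝ) ≤ (d:ℝ) := by exact_mod_cast hd
                  rw [div_lt_iff₀ (by norm_num : (0:ℝ) < 2)]
                  linarith
                exact hint.setLIntegral_lt_top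


lemma local_quad {d : ℕ} (hd : 3 ≤ d) {ω : (Fin d → ℝ) → ℝ} (hsmooth : ContDiff ℝ 2 ω)
    {ωmin : ℝ} (hmin : ∀ k, ωmin ≤ ω k) {x₀ : Fin d → ℝ} (hx₀ : ω x₀ = ωmin)
    (hH : ∀ v : Fin d → ℝ, v ≠ 0 → 0 < fderiv ℝ (fderiv ℝ ω) x₀ v v) :
    ∃ ε > 0, ∃ c > 0, ∀ k, dist k x₀ < ε → c * ‖k - x₀‖ ^ 2 ≤ ω k - ωmin := by
  haveI : Nonempty (Fin d) := ⟨⟨0, by omega⟩⟩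
  set B := fun x => fderiv ℝ (fderiv ℝ ω) x with hB
  have hB1 : ContDiff ℝ 1 (fderiv ℝ ω) := hsmooth.fderiv_right (by norm_num)
  have hBc : Continuous B := hB1.continuous_fderiv (by norm_num)
  have hDiff : Differentiable ℝ ω := hsmooth.differentiable (by norm_num)
  have hDiffB : Differentiable ℝ (fderiv ℝ ω) := hB1.differentiable (by norm_num)
  -- minimum of the Hessian quadratic form on the sphere
  have hne : (Metric.sphere (0 : Fin d → ℝ) 1).Nonempty :=
    NormedSpace.sphere_nonempty.mpr zero_le_one
  have hcont : ContinuousOn (fun v : Fin d → ℝ => B x₀ v v) (Metric.sphere 0 1) := by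
    apply Continuous.continuousOn
    exact isBoundedBilinearMap_apply.continuous.comp
      (((B x₀).continuous).prodMk continuous_id)
  obtain ⟨v₀, hv₀S, hv₀min'⟩ := (isCompact_sphere (0 : Fin d → ℝ) 1).exists_isMinOn hne hcont
  have hv₀min : ∀ v ∈ Metric.sphere (0 : Fin d → ℝ) 1, B x₀ v₀ v₀ ≤ B x₀ v v := fun v hv => hv₀min' hv
  set c₁ := B x₀ v₀ v₀ with hc₁
  have hv₀ne : v₀ ≠ 0 := by
    intro h
    rw [h] at hv₀S
    simp at hv₀S
  have hc₁pos : 0 < c₁ := hH v₀ hv₀ne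
  -- scaling
  have hscale : ∀ h : Fin d → ℝ, c₁ * ‖h‖ ^ 2 ≤ B x₀ h h := by
    intro h
    rcases eq_or_ne h 0 with rfl | hne0
    · simp
    · have hn : (0:ℝ) < ‖h‖ := norm_pos_iff.mpr hne0
      set v := ‖h‖⁻¹ • h with hv
      have hvS : v ∈ Metric.sphere (0 : Fin d → ℝ) 1 := by
        simp [hv, norm_smul, abs_of_pos (inv_pos.mpr hn), inv_mul_cancel₀ hn.ne']
      have hineq := hv₀min v hvS
      rw [hv] at hineq
      simp only [_root_.map_smul, ContinuousLinearMap.smul_apply, smul_eq_mul] at hineq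
      have h2 := mul_le_mul_of_nonneg_right hineq (sq_nonneg ‖h‖)
      have h3 : ‖h‖⁻¹ * (‖h‖⁻¹ * (B x₀ h h)) * ‖h‖ ^ 2 = B x₀ h h := by
        rw [sq]
        field_simp
      linarith
  -- continuity of B at x₀
  obtain ⟨δ, hδpos, hδ⟩ := (Metric.continuousAt_iff (f := B) (a := x₀)).mp hBc.continuousAt (c₁ / 3) (by linarith)
  refine ⟨δ, hδpos, c₁ / 6, by linarith, ?_⟩
  intro k hk
  set h := k - x₀ with hdef
  have hknorm : ‖h‖ < δ := by rwa [hdef, ← dist_eq_norm]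
  -- uniform positivity of the quadratic form along the segment
  have hquad : ∀ s : ℝ, |s| ≤ 1 → 2 * c₁ / 3 * ‖h‖ ^ 2 ≤ B (x₀ + s • h) h h := by
    intro s hs
    have hdist : dist (x₀ + s • h) x₀ < δ := by
      rw [dist_eq_norm, add_sub_cancel_left, norm_smul]
      calc |s| * ‖h‖ ≤ 1 * ‖h‖ := by
            apply mul_le_mul_of_nonneg_right hs (norm_nonneg _)
        _ < δ := by rwa [one_mul]
    have hnear := hδ hdist
    replace hnear : ‖B (x₀ + s • h) - B x₀‖ < c₁ / 3 :=
      lt_of_eq_of_lt (dist_eq_norm (B (x₀ + s • h)) (B x₀)).symm hnear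
    have hdiff : |B (x₀ + s • h) h h - B x₀ h h| ≤ c₁ / 3 * ‖h‖ ^ 2 := by
      have e1 : B (x₀ + s • h) h h - B x₀ h h = ((B (x₀ + s • h) - B x₀) h) h := by simp
      rw [e1]
      calc |((B (x₀ + s • h) - B x₀) h) h| ≤ ‖(B (x₀ + s • h) - B x₀) h‖ * ‖h‖ :=
            ((B (x₀ + s • h) - B x₀) h).le_opNorm h
        _ ≤ (‖B (x₀ + s • h) - B x₀‖ * ‖h‖) * ‖h‖ := by
            apply mul_le_mul_of_nonneg_right ((B (x₀ + s • h) - B x₀).le_opNorm h) (norm_nonneg _)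
        _ = ‖B (x₀ + s • h) - B x₀‖ * ‖h‖ ^ 2 := by ring
        _ ≤ c₁ / 3 * ‖h‖ ^ 2 := mul_le_mul_of_nonneg_right hnear.le (sq_nonneg _)
    have := hscale h
    have habs := abs_le.mp hdiff
    linarith [habs.1]
  -- the 1-D function along the segment
  set g : ℝ → ℝ := fun t => ω (x₀ + t • h) with hg
  have hline : ∀ t : ℝ, HasDerivAt (fun t : ℝ => x₀ + t • h) h t := fun t => by
    simpa using ((hasDerivAt_id t).smul_const h).const_add x₀
  have hg' : ∀ t : ℝ, HasDerivAt g (fderiv ℝ ω (x₀ + t • h) h) t := fun t =>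
    (hDiff _).hasFDerivAt.comp_hasDerivAt t (hline t)
  set φ : ℝ → ℝ := fun t => fderiv ℝ ω (x₀ + t • h) h with hφ
  have hφ' : ∀ t : ℝ, HasDerivAt φ (B (x₀ + t • h) h h) t := by
    intro t
    have h1 : HasFDerivAt (fun x => fderiv ℝ ω x h)
        ((ContinuousLinearMap.apply ℝ ℝ h).comp (B (x₀ + t • h))) (x₀ + t • h) :=
      (ContinuousLinearMap.apply ℝ ℝ h).hasFDerivAt.comp _ (hDiffB _).hasFDerivAt
    have := h1.comp_hasDerivAt t (hline t)
    exact this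
  -- critical point
  have hcrit : fderiv ℝ ω x₀ = 0 := by
    apply IsLocalMin.fderiv_eq_zero
    exact Filter.Eventually.of_forall fun y => by rw [hx₀]; exact hmin y
  have hφ0 : φ 0 = 0 := by simp [hφ, hcrit]
  -- MVT on [1/2, 1]
  obtain ⟨τ, hτmem, hτ⟩ := exists_hasDerivAt_eq_slope g φ (by norm_num : (1:ℝ)/2 < 1)
    (fun t _ => (hg' t).continuousAt.continuousWithinAt) (fun t _ => hg' t)
  -- MVT on [0, τ]
  have hτpos : (0:ℝ) < τ := lt_trans (by norm_num) hτmem.1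
  obtain ⟨σ, hσmem, hσ⟩ := exists_hasDerivAt_eq_slope φ (fun t => B (x₀ + t • h) h h) hτpos
    (fun t _ => (hφ' t).continuousAt.continuousWithinAt) (fun t _ => hφ' t)
  have hg1 : g 1 = ω k := by rw [hg]; simp [hdef]
  have hg0 : g 0 = ωmin := by rw [hg]; simp [hx₀]
  have hghalf : ωmin ≤ g (1/2) := hmin _
  have hquadσ : 2 * c₁ / 3 * ‖h‖ ^ 2 ≤ B (x₀ + σ • h) h h := by
    apply hquad
    rw [abs_of_pos hσmem.1]
    exact le_of_lt (lt_trans hσmem.2 (lt_of_lt_of_le hτmem.2 le_rfl))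
  -- combine
  rw [hσ] at hquadσ
  rw [hφ0, sub_zero] at hquadσ
  rw [hτ] at hquadσ
  -- hquadσ : 2c₁/3 ‖h‖² ≤ ((g 1 - g (1/2))/(1 - 1/2)) / (τ - 0)
  have hfinal : c₁ / 6 * ‖h‖ ^ 2 ≤ g 1 - g (1/2) := by
    have h2 : ((g 1 - g (1/2)) / (1 - 1/2)) / (τ - 0) = 2 * (g 1 - g (1/2)) / τ := by
      ring
    rw [h2] at hquadσ
    have h4 : 2 * c₁ / 3 * ‖h‖ ^ 2 * τ ≤ 2 * (g 1 - g (1/2)) := (le_div_iff₀ hτpos).mp hquadσ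
    have hq0 : (0:ℝ) ≤ 2 * c₁ / 3 * ‖h‖ ^ 2 :=
      mul_nonneg (by linarith) (sq_nonneg _)
    have h5 := mul_le_mul_of_nonneg_left hτmem.1.le hq0
    have h6 : 2 * c₁ / 3 * ‖h‖ ^ 2 * (1/2) = c₁ / 3 * ‖h‖ ^ 2 := by ring
    linarith
  have : ω k - ωmin ≥ g 1 - g (1/2) := by
    rw [← hg1]
    linarith
  linarith

/-- finiteness of the critical density integral
`ρ_∞ := ∫_{[0,1)^d} (ω(k) − ω_min)^{−1} dk` for a dispersion relation satisfying
Assumption (A). -/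
theorem critical_density_integral_finite
    (d : ℕ) (hd : 3 ≤ d) (ω : (Fin d → ℝ) → ℝ)
    (hper : ∀ (k : Fin d → ℝ) (n : Fin d → ℤ), ω (k + fun i => (n i : ℝ)) = ω k)
    (hsmooth : ContDiff ℝ 2 ω)
    (ωmin : ℝ) (hmin : ∀ k, ωmin ≤ ω k) (hattain : ∃ k, ω k = ωmin)
    (hT0 : Set.Finite {k : Fin d → ℝ | (∀ i, k i ∈ Set.Ico (0 : ℝ) 1) ∧ ω k = ωmin})
    (hHess : ∀ k₀ : Fin d → ℝ, ω k₀ = ωmin →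
      ∀ v : Fin d → ℝ, v ≠ 0 → 0 < iteratedFDeriv ℝ 2 ω k₀ ![v, v]) :
    IntegrableOn (fun k => (ω k - ωmin)⁻¹)
      (Set.univ.pi fun _ : Fin d => Set.Ico (0 : ℝ) 1) volume := by
  have hωcont : Continuous ω := hsmooth.continuous
  have hfm : Measurable fun k : Fin d → ℝ => (ω k - ωmin)⁻¹ :=
    ((hωcont.measurable).sub measurable_const).inv
  have hfnn : ∀ k, 0 ≤ (ω k - ωmin)⁻¹ := fun k => inv_nonneg.mpr (by linarith [hmin k])
  set S : Set (Fin d → ℝ) := {k | (∀ i, k i ∈ Set.Icc (0 : ℝ) 1) ∧ ω k = ωmin} with hSdef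
  -- S is finite
  have hSfin : S.Finite := by
    have himg : S ⊆ (fun p : (Fin d → ℝ) × (Fin d → ℝ) => p.1 + p.2) ''
        ({k : Fin d → ℝ | (∀ i, k i ∈ Set.Ico (0 : ℝ) 1) ∧ ω k = ωmin} ×ˢ
          (Set.univ.pi fun _ : Fin d => ({0, 1} : Set ℝ))) := by
      intro k hk
      refine ⟨(fun i => Int.fract (k i), fun i => ((⌊k i⌋ : ℤ) : ℝ)), ⟨⟨?_, ?_⟩, ?_⟩, ?_⟩
      · exact fun i => ⟨Int.fract_nonneg _, Int.fract_lt_one _⟩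
      · have := hper (fun i => Int.fract (k i)) (fun i => ⌊k i⌋)
        have he : (fun i => Int.fract (k i)) + (fun i => ((⌊k i⌋ : ℤ) : ℝ)) = k := by
          funext i
          exact Int.fract_add_floor (k i)
        rw [he] at this
        show ω (fun i => Int.fract (k i)) = ωmin
        rw [← this]
        exact hk.2
      · intro i _
        have h0 : (0:ℝ) ≤ k i := (hk.1 i).1
        have h1 : k i ≤ 1 := (hk.1 i).2
        rcases lt_or_eq_of_le h1 with h | h
        · have : ⌊k i⌋ = 0 := Int.floor_eq_zero_iff.mpr ⟨h0, h⟩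
          simp [this]
        · have : ⌊k i⌋ = 1 := by rw [h]; exact Int.floor_one
          simp [this]
      · funext i
        exact Int.fract_add_floor (k i)
    exact Set.Finite.subset (Set.Finite.image _
      (hT0.prod (Set.Finite.pi fun _ => (Set.finite_singleton (1:ℝ)).insert 0))) himg
  -- local quadratic bounds around each minimum
  have hloc : ∀ s : Fin d → ℝ, ∃ ε > 0, ∃ c > 0, ∀ k, s ∈ S → dist k s < ε →
      c * ‖k - s‖ ^ 2 ≤ ω k - ωmin := by
    intro s
    by_cases hs : s ∈ S
    · obtain ⟨ε, hε, c, hc, hb⟩ := local_quad hd hsmooth hmin hs.2 (fun v hv => by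
        have := hHess s hs.2 v hv
        rwa [iteratedFDeriv_two_apply, Matrix.cons_val_zero, Matrix.cons_val_one,
          Matrix.cons_val_zero] at this)
      exact ⟨ε, hε, c, hc, fun k _ hk => hb k hk⟩
    · exact ⟨1, one_pos, 1, one_pos, fun k hk => absurd hk hs⟩
  choose ε hεpos c hcpos hbd using hloc
  set U : Set (Fin d → ℝ) := ⋃ s ∈ S, Metric.ball s (ε s) with hUdef
  set K : Set (Fin d → ℝ) := (Set.univ.pi fun _ : Fin d => Set.Icc (0 : ℝ) 1) \ U with hKdef
  have hcube' : IsCompact (Set.univ.pi fun _ : Fin d => Set.Icc (0 : ℝ) 1) :=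
    isCompact_univ_pi fun _ => isCompact_Icc
  have hUopen : IsOpen U := isOpen_biUnion fun s _ => Metric.isOpen_ball
  have hKcomp : IsCompact K := hcube'.diff hUopen
  have hKpos : ∀ k ∈ K, 0 < ω k - ωmin := by
    intro k hk
    rcases lt_or_eq_of_le (hmin k) with h | h
    · linarith
    · exfalso
      have hkS : k ∈ S := ⟨fun i => hk.1 i (Set.mem_univ i), h.symm⟩
      exact hk.2 (Set.mem_biUnion hkS (Metric.mem_ball_self (hεpos k)))
  -- uniform lower bound on K
  have hδ : ∃ δ > 0, ∀ k ∈ K, δ ≤ ω k - ωmin := by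
    rcases K.eq_empty_or_nonempty with hKe | hKne
    · exact ⟨1, one_pos, fun k hk => by rw [hKe] at hk; exact absurd hk (Set.notMem_empty k)⟩
    · obtain ⟨k₀, hk₀K, hk₀min⟩ := hKcomp.exists_isMinOn hKne
        ((hωcont.sub continuous_const).continuousOn)
      exact ⟨ω k₀ - ωmin, hKpos k₀ hk₀K, fun k hk => hk₀min hk⟩
  obtain ⟨δ, hδpos, hδbd⟩ := hδ
  -- integrability on K
  have hIK : IntegrableOn (fun k => (ω k - ωmin)⁻¹) K volume := by
    apply Measure.integrableOn_of_bounded (M := δ⁻¹) hKcomp.measure_lt_top.ne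
      hfm.aestronglyMeasurable
    rw [ae_restrict_iff' hKcomp.isClosed.measurableSet]
    refine Filter.Eventually.of_forall fun k hk => ?_
    rw [Real.norm_eq_abs, abs_of_nonneg (hfnn k)]
    exact inv_anti₀ hδpos (hδbd k hk)
  -- integrability on each ball
  have hIball : ∀ s ∈ S, IntegrableOn (fun k => (ω k - ωmin)⁻¹) (Metric.ball s (ε s)) volume := by
    intro s hs
    have base : IntegrableOn (fun x : Fin d → ℝ => (c s)⁻¹ * (‖x - s‖ ^ 2)⁻¹)
        (Metric.ball s (ε s)) volume :=
      (integrableOn_inv_norm_sq_ball hd s (ε s)).const_mul _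
    refine Integrable.mono base hfm.aestronglyMeasurable.restrict ?_
    rw [ae_restrict_iff' Metric.isOpen_ball.measurableSet]
    refine Filter.Eventually.of_forall fun k hk => ?_
    rw [Real.norm_eq_abs, abs_of_nonneg (hfnn k), Real.norm_eq_abs, abs_of_nonneg
      (mul_nonneg (inv_nonneg.mpr (hcpos s).le) (inv_nonneg.mpr (sq_nonneg _)))]
    have hb := hbd s k hs (Metric.mem_ball.mp hk)
    rcases eq_or_ne k s with rfl | hne
    · rw [hs.2, sub_self, inv_zero]
      exact mul_nonneg (inv_nonneg.mpr (hcpos _).le) (inv_nonneg.mpr (sq_nonneg _))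
    · have hq : (0:ℝ) < ‖k - s‖ ^ 2 :=
        pow_pos (norm_pos_iff.mpr (sub_ne_zero_of_ne hne)) 2
      have hpos : (0:ℝ) < c s * ‖k - s‖ ^ 2 := mul_pos (hcpos s) hq
      calc (ω k - ωmin)⁻¹ ≤ (c s * ‖k - s‖ ^ 2)⁻¹ := inv_anti₀ hpos hb
        _ = (c s)⁻¹ * (‖k - s‖ ^ 2)⁻¹ := mul_inv _ _
  -- combine
  have hsub : (Set.univ.pi fun _ : Fin d => Set.Ico (0 : ℝ) 1) ⊆ K ∪ U := by
    intro k hk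
    by_cases hkU : k ∈ U
    · exact Or.inr hkU
    · exact Or.inl ⟨fun i _ => Set.Ico_subset_Icc_self (hk i (Set.mem_univ i)), hkU⟩
  have hIU : IntegrableOn (fun k => (ω k - ωmin)⁻¹) U volume :=
    (integrableOn_finite_biUnion hSfin).mpr hIball
  exact (hIK.union hIU).mono_set hsub
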